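/- Let A ∈ ℝ^{n×d} with rank(A) ≥ k and σ_k(A) > σ_{k+1}(A), and let G be any matrix with d columns such that ‖A G^T G A^T − A A^T‖₂ ≤ ε·σ₁(A)² for some ε < gap_k(A). Then AG^T has rank at least k and d₂(U_{AG^T,k}, U_{A,k}) ≤ ε / (gap_k(A) − ε). -/

import Mathlib

open Matrix MeasureTheory

noncomputable section

/-- Euclidean norm of a vector in `ℝ^n`. -/
def vnorm {n : ℕ} (v : Fin n → ℝ) : ℝ := Real.sqrt (∑ i, v i ^ 2)

/-- Spectral norm of a matrix (operator norm as a map between Euclidean spaces). -/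
def spec {m n : ℕ} (M : Matrix (Fin m) (Fin n) ℝ) : ℝ :=
  ‖LinearMap.toContinuousLinearMap (Matrix.toEuclideanLin M)‖

/-- The four Moore-Penrose conditions. -/
def IsMP {m n : ℕ} (X : Matrix (Fin m) (Fin n) ℝ) (Y : Matrix (Fin n) (Fin m) ℝ) : Prop :=
  X * Y * X = X ∧ Y * X * Y = Y ∧ (X * Y)ᵀ = X * Y ∧ (Y * X)ᵀ = Y * X

/-- The Moore-Penrose pseudoinverse (it always exists and is unique, so this choice-based
definition picks out exactly the Moore-Penrose pseudoinverse). -/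
def pinv {m n : ℕ} (X : Matrix (Fin m) (Fin n) ℝ) : Matrix (Fin n) (Fin m) ℝ := by
  classical exact if h : ∃ Y, IsMP X Y then h.choose else 0

/-- Orthogonal projection onto the column space of a matrix: `P_X = X X⁺`. -/
def projCol {m n : ℕ} (X : Matrix (Fin m) (Fin n) ℝ) : Matrix (Fin m) (Fin m) ℝ := X * pinv X

/-- Distance between column spaces: `d₂(U, W) = ‖P_U - P_W‖₂`. -/
def d2 {m p q : ℕ} (U : Matrix (Fin m) (Fin p) ℝ) (W : Matrix (Fin m) (Fin q) ℝ) : ℝ :=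
  spec (projCol U - projCol W)

/-- `(U, s, V)` is a thin SVD of `X`: orthonormal columns, nonincreasing nonnegative
singular values, and `X = U (diag s) Vᵀ`. -/
def IsThinSVD {m n p : ℕ} (X : Matrix (Fin m) (Fin n) ℝ) (U : Matrix (Fin m) (Fin p) ℝ)
    (s : Fin p → ℝ) (V : Matrix (Fin n) (Fin p) ℝ) : Prop :=
  Uᵀ * U = 1 ∧ Vᵀ * V = 1 ∧ Antitone s ∧ (∀ i, 0 ≤ s i) ∧ X = U * Matrix.diagonal s * Vᵀ

/-- The matrix of the first `k` columns. -/
def firstCols {m p : ℕ} (U : Matrix (Fin m) (Fin p) ℝ) (k : ℕ) (h : k ≤ p) :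
    Matrix (Fin m) (Fin k) ℝ := U.submatrix id (Fin.castLE h)

/-- The matrix of the remaining columns (columns `k+1, …, p` in 1-based indexing). -/
def tailCols {m p : ℕ} (U : Matrix (Fin m) (Fin p) ℝ) (k : ℕ) (h : k ≤ p) :
    Matrix (Fin m) (Fin (p - k)) ℝ :=
  U.submatrix id (fun j => ⟨k + j.1, by have := j.2; omega⟩)

/-- `sv s i` is the `i`-th singular value (1-indexed), `0` past the end. -/
def sv {p : ℕ} (s : Fin p → ℝ) (i : ℕ) : ℝ := by
  classical exact if h : i - 1 < p then s ⟨i - 1, h⟩ else 0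

end

noncomputable section Helpers

open Matrix

namespace S14

lemma enorm_eq {n : ℕ} (v : Fin n → ℝ) :
    ‖(WithLp.equiv 2 (Fin n → ℝ)).symm v‖ = Real.sqrt (v ⬝ᵥ v) := by
  rw [EuclideanSpace.norm_eq]
  congr 1
  simp [dotProduct, sq_abs, pow_two]

lemma inner_eq_dot {n : ℕ} (v w : Fin n → ℝ) :
    (inner ℝ ((WithLp.equiv 2 (Fin n → ℝ)).symm v) ((WithLp.equiv 2 (Fin n → ℝ)).symm w) : ℝ)
      = v ⬝ᵥ w := by
  rw [PiLp.inner_apply]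
  simp [dotProduct, mul_comm]

lemma inner_eq_dot' {n : ℕ} (v w : EuclideanSpace ℝ (Fin n)) :
    (inner ℝ v w : ℝ) = (WithLp.equiv 2 (Fin n → ℝ)) v ⬝ᵥ (WithLp.equiv 2 (Fin n → ℝ)) w :=
  inner_eq_dot _ _

lemma dot_self_nonneg {n : ℕ} (v : Fin n → ℝ) : 0 ≤ v ⬝ᵥ v :=
  Finset.sum_nonneg fun i _ => mul_self_nonneg _

lemma spec_nonneg {m n : ℕ} (M : Matrix (Fin m) (Fin n) ℝ) : 0 ≤ spec M := norm_nonneg _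

/-- norm bound for mulVec -/
lemma sqrt_dot_mulVec_le {m n : ℕ} (M : Matrix (Fin m) (Fin n) ℝ) (x : Fin n → ℝ) :
    Real.sqrt ((M *ᵥ x) ⬝ᵥ (M *ᵥ x)) ≤ spec M * Real.sqrt (x ⬝ᵥ x) := by
  have h := (LinearMap.toContinuousLinearMap (Matrix.toEuclideanLin M)).le_opNorm
    ((WithLp.equiv 2 (Fin n → ℝ)).symm x)
  rw [← enorm_eq, ← enorm_eq]
  simpa [spec, Matrix.toEuclideanLin_apply_piLp_toLp] using h

lemma spec_le_bound {m n : ℕ} (M : Matrix (Fin m) (Fin n) ℝ) (C : ℝ) (hC : 0 ≤ C)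
    (h : ∀ x, Real.sqrt ((M *ᵥ x) ⬝ᵥ (M *ᵥ x)) ≤ C * Real.sqrt (x ⬝ᵥ x)) : spec M ≤ C := by
  apply ContinuousLinearMap.opNorm_le_bound _ hC
  intro x
  have hx := h ((WithLp.equiv 2 (Fin n → ℝ)) x)
  have e1 : ‖LinearMap.toContinuousLinearMap (Matrix.toEuclideanLin M) x‖
      = Real.sqrt ((M *ᵥ (WithLp.equiv 2 (Fin n → ℝ)) x) ⬝ᵥ
          (M *ᵥ (WithLp.equiv 2 (Fin n → ℝ)) x)) := enorm_eq _
  have e2 : ‖x‖ = Real.sqrt (((WithLp.equiv 2 (Fin n → ℝ)) x) ⬝ᵥ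
      ((WithLp.equiv 2 (Fin n → ℝ)) x)) := enorm_eq _
  rw [e1, e2]; exact hx

lemma abs_dot_mulVec_le {m n : ℕ} (M : Matrix (Fin m) (Fin n) ℝ) (x : Fin m → ℝ) (y : Fin n → ℝ) :
    |x ⬝ᵥ (M *ᵥ y)| ≤ spec M * Real.sqrt (x ⬝ᵥ x) * Real.sqrt (y ⬝ᵥ y) := by
  have h1 : x ⬝ᵥ (M *ᵥ y) = (inner ℝ ((WithLp.equiv 2 (Fin m → ℝ)).symm x)
      ((WithLp.equiv 2 (Fin m → ℝ)).symm (M *ᵥ y)) : ℝ) := (inner_eq_dot _ _).symm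
  rw [h1]
  calc |(inner ℝ ((WithLp.equiv 2 (Fin m → ℝ)).symm x)
      ((WithLp.equiv 2 (Fin m → ℝ)).symm (M *ᵥ y)) : ℝ)|
      ≤ ‖(WithLp.equiv 2 (Fin m → ℝ)).symm x‖ * ‖(WithLp.equiv 2 (Fin m → ℝ)).symm (M *ᵥ y)‖ :=
        abs_real_inner_le_norm _ _
    _ ≤ Real.sqrt (x ⬝ᵥ x) * (spec M * Real.sqrt (y ⬝ᵥ y)) := by
        rw [enorm_eq, enorm_eq]
        exact mul_le_mul_of_nonneg_left (sqrt_dot_mulVec_le M y) (Real.sqrt_nonneg _)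
    _ = spec M * Real.sqrt (x ⬝ᵥ x) * Real.sqrt (y ⬝ᵥ y) := by ring

end S14
end Helpers

noncomputable section Helpers2
open Matrix
open scoped Matrix.Norms.L2Operator
namespace S14

lemma spec_eq_l2norm {m n : ℕ} (M : Matrix (Fin m) (Fin n) ℝ) : spec M = ‖M‖ := rfl

lemma conjT_eq_T {m n : ℕ} (M : Matrix (Fin m) (Fin n) ℝ) : Mᴴ = Mᵀ := by
  ext i j; simp [conjTranspose_apply]

lemma spec_transpose {m n : ℕ} (M : Matrix (Fin m) (Fin n) ℝ) : spec Mᵀ = spec M := by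
  rw [spec_eq_l2norm, spec_eq_l2norm, ← conjT_eq_T, l2_opNorm_conjTranspose]

lemma spec_neg {m n : ℕ} (M : Matrix (Fin m) (Fin n) ℝ) : spec (-M) = spec M := by
  rw [spec_eq_l2norm, spec_eq_l2norm, norm_neg]

lemma abs_quad_le {n : ℕ} (M : Matrix (Fin n) (Fin n) ℝ) (x : Fin n → ℝ) :
    |x ⬝ᵥ (M *ᵥ x)| ≤ spec M * (x ⬝ᵥ x) := by
  have h := abs_dot_mulVec_le M x x
  rwa [mul_assoc, Real.mul_self_sqrt (dot_self_nonneg x)] at h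

end S14
end Helpers2

noncomputable section MP
open Matrix
namespace S14

lemma isMP_unique {m n : ℕ} {X : Matrix (Fin m) (Fin n) ℝ} {Y Z : Matrix (Fin n) (Fin m) ℝ}
    (hY : IsMP X Y) (hZ : IsMP X Z) : Y = Z := by
  obtain ⟨hY1, hY2, hY3, hY4⟩ := hY
  obtain ⟨hZ1, hZ2, hZ3, hZ4⟩ := hZ
  have hXY : X * Y = X * Z := by
    calc X * Y = (X * Y)ᵀ := hY3.symm
      _ = (X * Z * X * Y)ᵀ := by rw [hZ1]
      _ = (X * Y)ᵀ * (X * Z)ᵀ := by rw [Matrix.mul_assoc (X * Z) X Y, Matrix.transpose_mul]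
      _ = X * Y * (X * Z) := by rw [hY3, hZ3]
      _ = X * Y * X * Z := by rw [← Matrix.mul_assoc]
      _ = X * Z := by rw [hY1]
  have hYX : Y * X = Z * X := by
    calc Y * X = Y * (X * Z * X) := by rw [hZ1]
      _ = Y * X * (Z * X) := by
          rw [Matrix.mul_assoc X Z X, ← Matrix.mul_assoc Y X (Z * X)]
      _ = (Y * X)ᵀ * (Z * X)ᵀ := by rw [hY4, hZ4]
      _ = (Z * X * (Y * X))ᵀ := by rw [← Matrix.transpose_mul]
      _ = (Z * (X * Y * X))ᵀ := by
          rw [Matrix.mul_assoc Z X (Y * X), ← Matrix.mul_assoc X Y X]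
      _ = (Z * X)ᵀ := by rw [hY1]
      _ = Z * X := hZ4
  calc Y = Y * X * Y := hY2.symm
    _ = Y * (X * Y) := by rw [Matrix.mul_assoc]
    _ = Y * (X * Z) := by rw [hXY]
    _ = Y * X * Z := by rw [← Matrix.mul_assoc]
    _ = Z * X * Z := by rw [hYX]
    _ = Z := hZ2

lemma pinv_eq {m n : ℕ} {X : Matrix (Fin m) (Fin n) ℝ} {Y : Matrix (Fin n) (Fin m) ℝ}
    (hY : IsMP X Y) : pinv X = Y := by
  have hex : ∃ Y, IsMP X Y := ⟨Y, hY⟩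
  rw [pinv, dif_pos hex]
  exact isMP_unique hex.choose_spec hY

lemma projCol_of_orthonormal {m n : ℕ} {X : Matrix (Fin m) (Fin n) ℝ}
    (hX : Xᵀ * X = 1) : projCol X = X * Xᵀ := by
  have h : IsMP X Xᵀ := by
    refine ⟨?_, ?_, ?_, ?_⟩
    · rw [Matrix.mul_assoc, hX, Matrix.mul_one]
    · rw [hX, Matrix.one_mul]
    · rw [Matrix.transpose_mul, Matrix.transpose_transpose]
    · rw [hX, Matrix.transpose_one]
  rw [projCol, pinv_eq h]

end S14
end MP

noncomputable section QF
open Matrix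
namespace S14

/-- `v ⬝ᵥ (U *ᵥ y) = (Uᵀ *ᵥ v) ⬝ᵥ y` -/
lemma dot_mulVec_left {m p : ℕ} (U : Matrix (Fin m) (Fin p) ℝ) (v : Fin m → ℝ) (y : Fin p → ℝ) :
    v ⬝ᵥ (U *ᵥ y) = (Uᵀ *ᵥ v) ⬝ᵥ y := by
  rw [Matrix.dotProduct_mulVec, Matrix.mulVec_transpose]

/-- quadratic form of `U * diagonal w * Uᵀ` -/
lemma quad_diag {m p : ℕ} (U : Matrix (Fin m) (Fin p) ℝ) (w : Fin p → ℝ) (v : Fin m → ℝ) :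
    v ⬝ᵥ ((U * diagonal w * Uᵀ) *ᵥ v) = ∑ j, w j * ((Uᵀ *ᵥ v) j)^2 := by
  rw [← Matrix.mulVec_mulVec, ← Matrix.mulVec_mulVec, dot_mulVec_left]
  simp only [dotProduct, Matrix.mulVec_diagonal]
  congr 1; ext j; ring

/-- contraction: `‖Uᵀ v‖² ≤ ‖v‖²` when `UᵀU = 1`. -/
lemma dot_transpose_le {m p : ℕ} {U : Matrix (Fin m) (Fin p) ℝ} (hU : Uᵀ * U = 1)
    (v : Fin m → ℝ) : (Uᵀ *ᵥ v) ⬝ᵥ (Uᵀ *ᵥ v) ≤ v ⬝ᵥ v := by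
  set y := Uᵀ *ᵥ v with hy
  have hUy : (U *ᵥ y) ⬝ᵥ (U *ᵥ y) = y ⬝ᵥ y := by
    rw [Matrix.dotProduct_mulVec, ← Matrix.mulVec_transpose, Matrix.mulVec_mulVec, hU,
      Matrix.one_mulVec]
  have hvy : v ⬝ᵥ (U *ᵥ y) = y ⬝ᵥ y := by rw [dot_mulVec_left]
  have key : (v - U *ᵥ y) ⬝ᵥ (v - U *ᵥ y) = v ⬝ᵥ v - y ⬝ᵥ y := by
    rw [dotProduct_sub, sub_dotProduct, sub_dotProduct, hUy, hvy,
      dotProduct_comm (U *ᵥ y) v, hvy]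
    ring
  have := dot_self_nonneg (v - U *ᵥ y)
  rw [key] at this
  linarith

/-- orthonormal columns are preserved by taking first columns -/
lemma firstCols_orth {m p : ℕ} {U : Matrix (Fin m) (Fin p) ℝ} (hU : Uᵀ * U = 1)
    {k : ℕ} (h : k ≤ p) : (firstCols U k h)ᵀ * (firstCols U k h) = 1 := by
  ext i j
  have := congrFun (congrFun hU (Fin.castLE h i)) (Fin.castLE h j)
  simp only [Matrix.mul_apply, Matrix.transpose_apply, firstCols, Matrix.submatrix_apply,
    id_eq] at this ⊢
  rw [this]
  by_cases hij : i = j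
  · subst hij; simp
  · rw [Matrix.one_apply_ne hij, Matrix.one_apply_ne]
    simpa [Fin.ext_iff] using hij

/-- coordinates of `(firstCols U k)ᵀ *ᵥ v` -/
lemma firstCols_transpose_mulVec {m p : ℕ} (U : Matrix (Fin m) (Fin p) ℝ) {k : ℕ} (h : k ≤ p)
    (v : Fin m → ℝ) (j : Fin k) :
    ((firstCols U k h)ᵀ *ᵥ v) j = (Uᵀ *ᵥ v) (Fin.castLE h j) := by
  simp [Matrix.mulVec, firstCols, dotProduct]

end S14
end QF

noncomputable section Weyl
open Matrix Module
namespace S14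

lemma dot_self_pos {n : ℕ} {v : Fin n → ℝ} (hv : v ≠ 0) : 0 < v ⬝ᵥ v := by
  rcases lt_or_eq_of_le (dot_self_nonneg v) with h | h
  · exact h
  · exfalso; apply hv
    have h0 : ∑ i, v i * v i = 0 := h.symm
    funext i
    have := (Finset.sum_eq_zero_iff_of_nonneg (fun i _ => mul_self_nonneg (v i))).mp h0 i
      (Finset.mem_univ i)
    exact mul_self_eq_zero.mp this

lemma mulVec_dot_self {m p : ℕ} {X : Matrix (Fin m) (Fin p) ℝ} (hX : Xᵀ * X = 1)
    (c : Fin p → ℝ) : (X *ᵥ c) ⬝ᵥ (X *ᵥ c) = c ⬝ᵥ c := by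
  rw [Matrix.dotProduct_mulVec, ← Matrix.mulVec_transpose, Matrix.mulVec_mulVec, hX,
    Matrix.one_mulVec]

/-- Weyl-type eigenvalue comparison via subspace intersection. -/
lemma weyl_aux {n p q : ℕ} (hpq : q < p)
    {X : Matrix (Fin n) (Fin p) ℝ} (hX : Xᵀ * X = 1)
    (Y : Matrix (Fin n) (Fin q) ℝ)
    (N N' : Matrix (Fin n) (Fin n) ℝ) (a b δ : ℝ)
    (hXN : ∀ c : Fin p → ℝ, a * (c ⬝ᵥ c) ≤ (X *ᵥ c) ⬝ᵥ (N *ᵥ (X *ᵥ c)))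
    (hYN' : ∀ v : Fin n → ℝ, Yᵀ *ᵥ v = 0 → v ⬝ᵥ (N' *ᵥ v) ≤ b * (v ⬝ᵥ v))
    (hd : spec (N - N') ≤ δ) : a ≤ b + δ := by
  have S1def : True := trivial
  have hS1 : finrank ℝ (LinearMap.range (Matrix.mulVecLin X)) = p := by
    rw [LinearMap.finrank_range_of_inj, Module.finrank_fin_fun]
    intro c1 c2 hc
    simp only [Matrix.mulVecLin_apply] at hc
    have : Xᵀ *ᵥ (X *ᵥ c1) = Xᵀ *ᵥ (X *ᵥ c2) := by rw [hc]
    rwa [Matrix.mulVec_mulVec, Matrix.mulVec_mulVec, hX, Matrix.one_mulVec,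
      Matrix.one_mulVec] at this
  have hS2 : n - q ≤ finrank ℝ (LinearMap.ker (Matrix.mulVecLin Yᵀ)) := by
    have h1 := LinearMap.finrank_range_add_finrank_ker (Matrix.mulVecLin Yᵀ)
    have h2 : finrank ℝ (LinearMap.range (Matrix.mulVecLin Yᵀ)) ≤ q := by
      have := Submodule.finrank_le (LinearMap.range (Matrix.mulVecLin Yᵀ))
      rwa [Module.finrank_fin_fun] at this
    rw [Module.finrank_fin_fun] at h1
    omega
  have hsum : finrank ℝ (LinearMap.range (Matrix.mulVecLin X) ⊔ LinearMap.ker (Matrix.mulVecLin Yᵀ) : Submodule ℝ (Fin n → ℝ)) + finrank ℝ (LinearMap.range (Matrix.mulVecLin X) ⊓ LinearMap.ker (Matrix.mulVecLin Yᵀ) :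
      Submodule ℝ (Fin n → ℝ)) = finrank ℝ (LinearMap.range (Matrix.mulVecLin X)) + finrank ℝ (LinearMap.ker (Matrix.mulVecLin Yᵀ)) :=
    Submodule.finrank_sup_add_finrank_inf_eq _ _
  have hsup : finrank ℝ (LinearMap.range (Matrix.mulVecLin X) ⊔ LinearMap.ker (Matrix.mulVecLin Yᵀ) : Submodule ℝ (Fin n → ℝ)) ≤ n := by
    have := Submodule.finrank_le (LinearMap.range (Matrix.mulVecLin X) ⊔ LinearMap.ker (Matrix.mulVecLin Yᵀ))
    rwa [Module.finrank_fin_fun] at this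
  have hpn : p ≤ n := by
    have := Submodule.finrank_le (LinearMap.range (Matrix.mulVecLin X))
    rw [hS1, Module.finrank_fin_fun] at this
    exact this
  have hchain : n + 1 ≤ n + finrank ℝ (LinearMap.range (Matrix.mulVecLin X) ⊓ LinearMap.ker (Matrix.mulVecLin Yᵀ) : Submodule ℝ (Fin n → ℝ)) := by
    calc n + 1 ≤ p + (n - q) := by omega
      _ ≤ finrank ℝ (LinearMap.range (Matrix.mulVecLin X)) + finrank ℝ (LinearMap.ker (Matrix.mulVecLin Yᵀ)) := by rw [hS1]; exact add_le_add_right hS2 p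
      _ = finrank ℝ (LinearMap.range (Matrix.mulVecLin X) ⊔ LinearMap.ker (Matrix.mulVecLin Yᵀ) : Submodule ℝ (Fin n → ℝ)) +
          finrank ℝ (LinearMap.range (Matrix.mulVecLin X) ⊓ LinearMap.ker (Matrix.mulVecLin Yᵀ) : Submodule ℝ (Fin n → ℝ)) := hsum.symm
      _ ≤ n + finrank ℝ (LinearMap.range (Matrix.mulVecLin X) ⊓ LinearMap.ker (Matrix.mulVecLin Yᵀ) : Submodule ℝ (Fin n → ℝ)) := add_le_add_left hsup _
  have hpos : 0 < finrank ℝ (LinearMap.range (Matrix.mulVecLin X) ⊓ LinearMap.ker (Matrix.mulVecLin Yᵀ) : Submodule ℝ (Fin n → ℝ)) := by omega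
  obtain ⟨⟨v, hv⟩, hvne0⟩ := Module.finrank_pos_iff_exists_ne_zero.mp hpos
  have hvne : v ≠ 0 := by
    intro h; apply hvne0; exact Subtype.ext h
  obtain ⟨c, hc⟩ := hv.1
  have hker : Yᵀ *ᵥ v = 0 := hv.2
  simp only [Matrix.mulVecLin_apply] at hc
  have h1 : a * (c ⬝ᵥ c) ≤ v ⬝ᵥ (N *ᵥ v) := by
    have := hXN c; rwa [hc] at this
  have h2 : v ⬝ᵥ (N' *ᵥ v) ≤ b * (v ⬝ᵥ v) := hYN' v hker
  have h3 : v ⬝ᵥ (N *ᵥ v) - v ⬝ᵥ (N' *ᵥ v) ≤ δ * (v ⬝ᵥ v) := by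
    have e : v ⬝ᵥ ((N - N') *ᵥ v) = v ⬝ᵥ (N *ᵥ v) - v ⬝ᵥ (N' *ᵥ v) := by
      rw [Matrix.sub_mulVec, dotProduct_sub]
    have habs := abs_quad_le (N - N') v
    have hlee : v ⬝ᵥ ((N - N') *ᵥ v) ≤ spec (N - N') * (v ⬝ᵥ v) := (le_abs_self _).trans habs
    rw [e] at hlee
    calc v ⬝ᵥ (N *ᵥ v) - v ⬝ᵥ (N' *ᵥ v) ≤ spec (N - N') * (v ⬝ᵥ v) := hlee
      _ ≤ δ * (v ⬝ᵥ v) := mul_le_mul_of_nonneg_right hd (dot_self_nonneg v)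
  have hcc : c ⬝ᵥ c = v ⬝ᵥ v := by rw [← hc]; exact (mulVec_dot_self hX c).symm
  rw [hcc] at h1
  have ht : 0 < v ⬝ᵥ v := dot_self_pos hvne
  nlinarith [h1, h2, h3, ht]

end S14
end Weyl

noncomputable section OneSided
open Matrix
namespace S14

lemma sandwich {m p q : ℕ} {U : Matrix (Fin m) (Fin p) ℝ} (hU : Uᵀ * U = 1)
    (B : Matrix (Fin p) (Fin q) ℝ) : (U * Uᵀ) * (U * B) = U * B := by
  rw [Matrix.mul_assoc U Uᵀ (U * B), ← Matrix.mul_assoc Uᵀ U B, hU, Matrix.one_mul]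

lemma proj_idem {m p : ℕ} {U : Matrix (Fin m) (Fin p) ℝ} (hU : Uᵀ * U = 1) :
    (U * Uᵀ) * (U * Uᵀ) = U * Uᵀ := sandwich hU Uᵀ

lemma proj_symm {m p : ℕ} (U : Matrix (Fin m) (Fin p) ℝ) : (U * Uᵀ)ᵀ = U * Uᵀ := by
  rw [Matrix.transpose_mul, Matrix.transpose_transpose]

lemma one_sub_proj_idem {m p : ℕ} {U : Matrix (Fin m) (Fin p) ℝ} (hU : Uᵀ * U = 1) :
    (1 - U * Uᵀ) * (1 - U * Uᵀ) = 1 - U * Uᵀ := by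
  rw [Matrix.sub_mul, Matrix.one_mul, Matrix.mul_sub, Matrix.mul_one, proj_idem hU,
    sub_self, sub_zero]

lemma transpose_one_sub_proj {m p : ℕ} (U : Matrix (Fin m) (Fin p) ℝ) :
    (1 - U * Uᵀ)ᵀ = 1 - U * Uᵀ := by
  rw [Matrix.transpose_sub, Matrix.transpose_one, proj_symm]

lemma dot_mulVec_right {m p : ℕ} (M : Matrix (Fin m) (Fin p) ℝ) (x : Fin p → ℝ)
    (z : Fin m → ℝ) : (M *ᵥ x) ⬝ᵥ z = x ⬝ᵥ (Mᵀ *ᵥ z) := by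
  rw [dotProduct_comm, dot_mulVec_left, dotProduct_comm]

/-- existence of a top eigenvector of a symmetric matrix -/
lemma exists_top_eigen {n : ℕ} (hn : 0 < n) (S : Matrix (Fin n) (Fin n) ℝ)
    (hHerm : S.IsHermitian) (hSt : Sᵀ = S) :
    ∃ (μ : ℝ) (v0 : Fin n → ℝ), S *ᵥ v0 = μ • v0 ∧ v0 ⬝ᵥ v0 = 1 ∧
      ∀ x : Fin n → ℝ, x ⬝ᵥ (S *ᵥ x) ≤ μ * (x ⬝ᵥ x) := by
  have hne : (Finset.univ : Finset (Fin n)).Nonempty := ⟨⟨0, hn⟩, Finset.mem_univ _⟩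
  obtain ⟨i0, -, hi0max⟩ := Finset.exists_max_image Finset.univ hHerm.eigenvalues hne
  refine ⟨hHerm.eigenvalues i0, ⇑(hHerm.eigenvectorBasis i0),
    hHerm.mulVec_eigenvectorBasis i0, ?_, ?_⟩
  · have h1 : ‖hHerm.eigenvectorBasis i0‖ = 1 := hHerm.eigenvectorBasis.orthonormal.1 i0
    have h2 : ‖(WithLp.equiv 2 (Fin n → ℝ)).symm ⇑(hHerm.eigenvectorBasis i0)‖
        = Real.sqrt (⇑(hHerm.eigenvectorBasis i0) ⬝ᵥ ⇑(hHerm.eigenvectorBasis i0)) :=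
      enorm_eq _
    have h3 : ‖(WithLp.equiv 2 (Fin n → ℝ)).symm ⇑(hHerm.eigenvectorBasis i0)‖
        = ‖hHerm.eigenvectorBasis i0‖ := rfl
    rw [h3, h1] at h2
    exact Real.sqrt_eq_one.mp h2.symm
  · intro x
    have hrepr : ∀ (i : Fin n) (y : Fin n → ℝ),
        hHerm.eigenvectorBasis.repr ((WithLp.equiv 2 (Fin n → ℝ)).symm y) i
          = ⇑(hHerm.eigenvectorBasis i) ⬝ᵥ y := by
      intro i y
      rw [OrthonormalBasis.repr_apply_apply]
      exact inner_eq_dot _ _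
    have hxx : x ⬝ᵥ x = ∑ i, (⇑(hHerm.eigenvectorBasis i) ⬝ᵥ x)^2 := by
      have h1 : x ⬝ᵥ x = (inner ℝ ((WithLp.equiv 2 (Fin n → ℝ)).symm x)
          ((WithLp.equiv 2 (Fin n → ℝ)).symm x) : ℝ) := (inner_eq_dot x x).symm
      rw [h1, ← hHerm.eigenvectorBasis.repr.inner_map_map, inner_eq_dot']
      simp only [dotProduct, WithLp.equiv_apply]
      apply Finset.sum_congr rfl
      intro i _
      rw [hrepr i x]
      simp [dotProduct, WithLp.equiv_apply, sq]
    have hreprS : ∀ i : Fin n,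
        hHerm.eigenvectorBasis.repr ((WithLp.equiv 2 (Fin n → ℝ)).symm (S *ᵥ x)) i
          = hHerm.eigenvalues i * (⇑(hHerm.eigenvectorBasis i) ⬝ᵥ x) := by
      intro i
      rw [hrepr i (S *ᵥ x), dot_mulVec_left, hSt, hHerm.mulVec_eigenvectorBasis i,
        smul_dotProduct, smul_eq_mul]
    have hxSx : x ⬝ᵥ (S *ᵥ x)
        = ∑ i, hHerm.eigenvalues i * (⇑(hHerm.eigenvectorBasis i) ⬝ᵥ x)^2 := by
      have h1 : x ⬝ᵥ (S *ᵥ x) = (inner ℝ ((WithLp.equiv 2 (Fin n → ℝ)).symm x)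
          ((WithLp.equiv 2 (Fin n → ℝ)).symm (S *ᵥ x)) : ℝ) := (inner_eq_dot _ _).symm
      rw [h1, ← hHerm.eigenvectorBasis.repr.inner_map_map, inner_eq_dot']
      simp only [dotProduct, WithLp.equiv_apply]
      apply Finset.sum_congr rfl
      intro i _
      rw [hrepr i x, hreprS i]
      simp [dotProduct, WithLp.equiv_apply, sq]
      ring
    rw [hxSx, hxx, Finset.mul_sum]
    apply Finset.sum_le_sum
    intro i _
    exact mul_le_mul_of_nonneg_right (hi0max i (Finset.mem_univ i)) (sq_nonneg _)

/-- The one-sided sin-theta bound: `spec ((1-Q)P) * (a-b) ≤ δ`. -/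
lemma one_sided {n k : ℕ}
    {U1 W1 : Matrix (Fin n) (Fin k) ℝ}
    (hU1 : U1ᵀ * U1 = 1) (hW1 : W1ᵀ * W1 = 1)
    {N N' : Matrix (Fin n) (Fin n) ℝ}
    (hNs : Nᵀ = N) (hN's : N'ᵀ = N')
    {CN : Matrix (Fin k) (Fin k) ℝ} (hCN : N * U1 = U1 * CN)
    {C' : Matrix (Fin k) (Fin k) ℝ} (hC' : N' * W1 = W1 * C')
    (a b δ : ℝ)
    (hNP : ∀ c : Fin k → ℝ, a * (c ⬝ᵥ c) ≤ (U1 *ᵥ c) ⬝ᵥ (N *ᵥ (U1 *ᵥ c)))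
    (hN'Q : ∀ u : Fin n → ℝ, W1ᵀ *ᵥ u = 0 → u ⬝ᵥ (N' *ᵥ u) ≤ b * (u ⬝ᵥ u))
    (hδ : spec (N' - N) ≤ δ) :
    spec ((1 - W1 * W1ᵀ) * (U1 * U1ᵀ)) * (a - b) ≤ δ := by
  have hδ0 : 0 ≤ δ := le_trans (spec_nonneg _) hδ
  set P := U1 * U1ᵀ with hPdef
  set Q := W1 * W1ᵀ with hQdef
  set R := (1 - Q) * P with hRdef
  rcases eq_or_lt_of_le (spec_nonneg R) with hc0 | hcpos
  · rw [show spec R = 0 from hc0.symm, zero_mul]; exact hδ0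
  -- matrix identities
  have hP2 : P * P = P := proj_idem hU1
  have hQ2 : Q * Q = Q := proj_idem hW1
  have h1Q2 : (1 - Q) * (1 - Q) = 1 - Q := one_sub_proj_idem hW1
  have hRt : Rᵀ = P * (1 - Q) := by
    rw [hRdef, Matrix.transpose_mul, proj_symm, transpose_one_sub_proj]
  have hS_eq : Rᵀ * R = P * (1 - Q) * P := by
    rw [hRt, hRdef, ← Matrix.mul_assoc (P * (1 - Q)) (1 - Q) P,
      Matrix.mul_assoc P (1 - Q) (1 - Q), h1Q2]
  set S := Rᵀ * R with hSdef
  have hSt : Sᵀ = S := by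
    rw [hSdef, Matrix.transpose_mul, Matrix.transpose_transpose]
  have hNmP : N * P = U1 * (CN * U1ᵀ) := by
    rw [hPdef, ← Matrix.mul_assoc, hCN, Matrix.mul_assoc]
  have hPNP : P * (N * P) = N * P := by rw [hNmP]; exact sandwich hU1 _
  have hPS : P * S = S := by
    rw [hS_eq, ← Matrix.mul_assoc P (P * (1 - Q)) P, ← Matrix.mul_assoc P P (1 - Q), hP2]
  have hW1R : W1ᵀ * R = 0 := by
    have h1 : W1ᵀ * (1 - Q) = 0 := by
      rw [Matrix.mul_sub, Matrix.mul_one, hQdef, ← Matrix.mul_assoc, hW1, Matrix.one_mul,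
        sub_self]
    rw [hRdef, ← Matrix.mul_assoc, h1, Matrix.zero_mul]
  have hHerm : S.IsHermitian := by
    rw [Matrix.IsHermitian, conjT_eq_T, hSt]
  have hn : 0 < n := by
    by_contra h
    push_neg at h
    interval_cases n
    have hz : spec R ≤ 0 := by
      apply spec_le_bound _ _ (le_refl 0)
      intro x
      have hx0 : x = 0 := by funext i; exact absurd i.2 (by omega)
      simp [hx0]
    linarith
  obtain ⟨μ, v0, heig, hv0n, hexp⟩ := exists_top_eigen hn S hHerm hSt
  -- ⟨x, Sx⟩ = ‖Rx‖²
  have hqS : ∀ x : Fin n → ℝ, x ⬝ᵥ (S *ᵥ x) = (R *ᵥ x) ⬝ᵥ (R *ᵥ x) := by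
    intro x
    rw [hSdef, ← Matrix.mulVec_mulVec, dot_mulVec_left, Matrix.transpose_transpose]
  have hμ : μ = (R *ᵥ v0) ⬝ᵥ (R *ᵥ v0) := by
    rw [← hqS, heig, dotProduct_smul, smul_eq_mul, hv0n, mul_one]
  have hμ0 : 0 ≤ μ := hμ ▸ dot_self_nonneg _
  have hcle : spec R ≤ Real.sqrt μ := by
    apply spec_le_bound _ _ (Real.sqrt_nonneg _)
    intro x
    have h1 : (R *ᵥ x) ⬝ᵥ (R *ᵥ x) ≤ μ * (x ⬝ᵥ x) := by rw [← hqS]; exact hexp x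
    calc Real.sqrt ((R *ᵥ x) ⬝ᵥ (R *ᵥ x)) ≤ Real.sqrt (μ * (x ⬝ᵥ x)) := Real.sqrt_le_sqrt h1
      _ = Real.sqrt μ * Real.sqrt (x ⬝ᵥ x) := Real.sqrt_mul hμ0 _
  have hcge : Real.sqrt μ ≤ spec R := by
    have h1 := sqrt_dot_mulVec_le R v0
    rw [← hμ, hv0n, Real.sqrt_one, mul_one] at h1
    exact h1
  have hceq : spec R = Real.sqrt μ := le_antisymm hcle hcge
  have hc2 : (spec R)^2 = μ := by rw [hceq, Real.sq_sqrt hμ0]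
  have hμpos : 0 < μ := by rw [← hc2]; positivity
  have hPv0 : P *ᵥ v0 = v0 := by
    have h1 : v0 = μ⁻¹ • (S *ᵥ v0) := by
      rw [heig, smul_smul, inv_mul_cancel₀ (ne_of_gt hμpos), one_smul]
    calc P *ᵥ v0 = P *ᵥ (μ⁻¹ • (S *ᵥ v0)) := by rw [← h1]
      _ = μ⁻¹ • (P *ᵥ (S *ᵥ v0)) := by rw [Matrix.mulVec_smul]
      _ = μ⁻¹ • ((P * S) *ᵥ v0) := by rw [Matrix.mulVec_mulVec]
      _ = μ⁻¹ • (S *ᵥ v0) := by rw [hPS]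
      _ = v0 := h1.symm
  set u := R *ᵥ v0 with hudef
  have huu : u ⬝ᵥ u = μ := hμ.symm
  have hW1u : W1ᵀ *ᵥ u = 0 := by
    rw [hudef, Matrix.mulVec_mulVec, hW1R, Matrix.zero_mulVec]
  have hu_eq : u = v0 - Q *ᵥ v0 := by
    rw [hudef, hRdef, ← Matrix.mulVec_mulVec, hPv0, Matrix.sub_mulVec, Matrix.one_mulVec]
  -- (a) u ⬝ᵥ N' v0 = u ⬝ᵥ N' u
  have hN'Qm : N' * Q = W1 * (C' * W1ᵀ) := by
    rw [hQdef, ← Matrix.mul_assoc, hC', Matrix.mul_assoc]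
  have ha : u ⬝ᵥ (N' *ᵥ v0) = u ⬝ᵥ (N' *ᵥ u) := by
    have h1 : u ⬝ᵥ (N' *ᵥ (Q *ᵥ v0)) = 0 := by
      rw [Matrix.mulVec_mulVec, hN'Qm, ← Matrix.mulVec_mulVec, dot_mulVec_left, hW1u,
        zero_dotProduct]
    have h2 : N' *ᵥ v0 = N' *ᵥ u + N' *ᵥ (Q *ᵥ v0) := by
      rw [← Matrix.mulVec_add, hu_eq, sub_add_cancel]
    rw [h2, dotProduct_add, h1, add_zero]
  -- (b) u ⬝ᵥ N v0 = μ * (v0 ⬝ᵥ N v0)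
  have hNv0 : N *ᵥ v0 = (N * P) *ᵥ v0 := by
    rw [← Matrix.mulVec_mulVec, hPv0]
  have hkey : Rᵀ * (N * P) = S * (N * P) := by
    rw [hRt, hS_eq, Matrix.mul_assoc (P * (1 - Q)) P (N * P), hPNP]
  have hb : u ⬝ᵥ (N *ᵥ v0) = μ * (v0 ⬝ᵥ (N *ᵥ v0)) := by
    calc u ⬝ᵥ (N *ᵥ v0) = (R *ᵥ v0) ⬝ᵥ ((N * P) *ᵥ v0) := by rw [hudef, ← hNv0]
      _ = v0 ⬝ᵥ (Rᵀ *ᵥ ((N * P) *ᵥ v0)) := dot_mulVec_right _ _ _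
      _ = v0 ⬝ᵥ ((Rᵀ * (N * P)) *ᵥ v0) := by rw [Matrix.mulVec_mulVec]
      _ = v0 ⬝ᵥ ((S * (N * P)) *ᵥ v0) := by rw [hkey]
      _ = v0 ⬝ᵥ (S *ᵥ ((N * P) *ᵥ v0)) := by rw [Matrix.mulVec_mulVec]
      _ = (Sᵀ *ᵥ v0) ⬝ᵥ ((N * P) *ᵥ v0) := by rw [dot_mulVec_left]
      _ = (μ • v0) ⬝ᵥ ((N * P) *ᵥ v0) := by rw [hSt, heig]
      _ = μ * (v0 ⬝ᵥ ((N * P) *ᵥ v0)) := by rw [smul_dotProduct, smul_eq_mul]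
      _ = μ * (v0 ⬝ᵥ (N *ᵥ v0)) := by rw [← hNv0]
  -- quadratic form bounds
  have hquad : a ≤ v0 ⬝ᵥ (N *ᵥ v0) := by
    have h := hNP (U1ᵀ *ᵥ v0)
    have e1 : U1 *ᵥ (U1ᵀ *ᵥ v0) = v0 := by
      rw [Matrix.mulVec_mulVec, ← hPdef, hPv0]
    have e2 : (U1ᵀ *ᵥ v0) ⬝ᵥ (U1ᵀ *ᵥ v0) = 1 := by
      rw [← dot_mulVec_left U1 v0 (U1ᵀ *ᵥ v0), e1, hv0n]
    rw [e1, e2, mul_one] at h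
    exact h
  have hbb : u ⬝ᵥ (N' *ᵥ u) ≤ b * μ := by
    have h := hN'Q u hW1u
    rwa [huu] at h
  have hE : |u ⬝ᵥ ((N' - N) *ᵥ v0)| ≤ δ * Real.sqrt μ := by
    calc |u ⬝ᵥ ((N' - N) *ᵥ v0)|
        ≤ spec (N' - N) * Real.sqrt (u ⬝ᵥ u) * Real.sqrt (v0 ⬝ᵥ v0) := abs_dot_mulVec_le _ _ _
      _ = spec (N' - N) * Real.sqrt μ := by rw [huu, hv0n, Real.sqrt_one, mul_one]
      _ ≤ δ * Real.sqrt μ := mul_le_mul_of_nonneg_right hδ (Real.sqrt_nonneg _)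
  have hsplit : u ⬝ᵥ ((N' - N) *ᵥ v0) = u ⬝ᵥ (N' *ᵥ u) - μ * (v0 ⬝ᵥ (N *ᵥ v0)) := by
    rw [Matrix.sub_mulVec, dotProduct_sub, ha, hb]
  have hμa : μ * a ≤ b * μ + δ * Real.sqrt μ := by
    have h1 : μ * a ≤ μ * (v0 ⬝ᵥ (N *ᵥ v0)) := mul_le_mul_of_nonneg_left hquad hμ0
    have h2 : -(δ * Real.sqrt μ) ≤ u ⬝ᵥ ((N' - N) *ᵥ v0) := neg_le_of_abs_le hE
    rw [hsplit] at h2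
    linarith
  rw [← hceq, ← hc2] at hμa
  nlinarith [hμa, hcpos]

end S14
end OneSided

noncomputable section Combine
open Matrix
namespace S14

lemma dot_mulVec_sq_le {m n : ℕ} (M : Matrix (Fin m) (Fin n) ℝ) (x : Fin n → ℝ) (C : ℝ)
    (hC : 0 ≤ C) (h : spec M ≤ C) : (M *ᵥ x) ⬝ᵥ (M *ᵥ x) ≤ C^2 * (x ⬝ᵥ x) := by
  have h1 := sqrt_dot_mulVec_le M x
  have h2 : Real.sqrt ((M *ᵥ x) ⬝ᵥ (M *ᵥ x)) ≤ C * Real.sqrt (x ⬝ᵥ x) :=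
    le_trans h1 (mul_le_mul_of_nonneg_right h (Real.sqrt_nonneg _))
  nlinarith [Real.sq_sqrt (dot_self_nonneg (M *ᵥ x)), Real.sq_sqrt (dot_self_nonneg x),
    Real.sqrt_nonneg ((M *ᵥ x) ⬝ᵥ (M *ᵥ x)), Real.sqrt_nonneg (x ⬝ᵥ x), hC]

lemma combine {n k : ℕ} {U1 W1 : Matrix (Fin n) (Fin k) ℝ}
    (hU1 : U1ᵀ * U1 = 1) (hW1 : W1ᵀ * W1 = 1) {Bd : ℝ} (hB : 0 ≤ Bd)
    (h1 : spec ((1 - W1 * W1ᵀ) * (U1 * U1ᵀ)) ≤ Bd)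
    (h2 : spec ((1 - U1 * U1ᵀ) * (W1 * W1ᵀ)) ≤ Bd) :
    spec (W1 * W1ᵀ - U1 * U1ᵀ) ≤ Bd := by
  set P := U1 * U1ᵀ with hPdef
  set Q := W1 * W1ᵀ with hQdef
  have hP2 : P * P = P := proj_idem hU1
  have hQ2 : Q * Q = Q := proj_idem hW1
  have hPt : Pᵀ = P := proj_symm U1
  have hQt : Qᵀ = Q := proj_symm W1
  set R2 := (1 - P) * Q with hR2def
  set R1 := P * (1 - Q) with hR1def
  have hR1t : spec R1 ≤ Bd := by
    have e : R1 = ((1 - Q) * P)ᵀ := by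
      rw [hR1def, Matrix.transpose_mul, hPt, transpose_one_sub_proj]
    rw [e, spec_transpose]
    exact h1
  -- matrix identity
  have e1 : Q * (1 - P) * Q = Q - Q * P * Q := by
    rw [Matrix.mul_sub, Matrix.mul_one, Matrix.sub_mul, hQ2]
  have e2 : (1 - Q) * P * (1 - Q) = P - P * Q - (Q * P - Q * P * Q) := by
    rw [Matrix.sub_mul (1 : Matrix (Fin n) (Fin n) ℝ) Q P, Matrix.one_mul,
      Matrix.sub_mul (P) (Q * P) (1 - Q), Matrix.mul_sub P, Matrix.mul_sub (Q * P),
      Matrix.mul_one, Matrix.mul_one]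
  have e3 : (Q - P) * (Q - P) = Q - Q * P - (P * Q - P) := by
    rw [Matrix.sub_mul, Matrix.mul_sub, Matrix.mul_sub, hP2, hQ2]
  have Mident : (Q - P)ᵀ * (Q - P) = R2ᵀ * R2 + R1ᵀ * R1 := by
    have t1 : (Q - P)ᵀ = Q - P := by rw [Matrix.transpose_sub, hPt, hQt]
    have t2 : R2ᵀ = Q * (1 - P) := by
      rw [hR2def, Matrix.transpose_mul, hQt, transpose_one_sub_proj]
    have t3 : R1ᵀ = (1 - Q) * P := by
      rw [hR1def, Matrix.transpose_mul, hPt, transpose_one_sub_proj]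
    rw [t1, t2, t3]
    have a1 : Q * (1 - P) * R2 = Q * (1 - P) * Q := by
      rw [hR2def, ← Matrix.mul_assoc (Q * (1 - P)) (1 - P) Q,
        Matrix.mul_assoc Q (1 - P) (1 - P), one_sub_proj_idem hU1]
    have a2 : (1 - Q) * P * R1 = (1 - Q) * P * (1 - Q) := by
      rw [hR1def, ← Matrix.mul_assoc ((1 - Q) * P) P (1 - Q),
        Matrix.mul_assoc (1 - Q) P P, hP2]
    rw [a1, a2, e1, e2, e3]
    abel
  -- pointwise bound
  apply spec_le_bound _ _ hB
  intro x
  have hsq : ((Q - P) *ᵥ x) ⬝ᵥ ((Q - P) *ᵥ x) ≤ Bd^2 * (x ⬝ᵥ x) := by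
    have hd : ((Q - P) *ᵥ x) ⬝ᵥ ((Q - P) *ᵥ x)
        = (R2 *ᵥ x) ⬝ᵥ (R2 *ᵥ x) + (R1 *ᵥ x) ⬝ᵥ (R1 *ᵥ x) := by
      rw [dot_mulVec_right, Matrix.mulVec_mulVec, Mident,
        dot_mulVec_right R2, Matrix.mulVec_mulVec,
        dot_mulVec_right R1, Matrix.mulVec_mulVec,
        Matrix.add_mulVec, dotProduct_add]
    have hR2x : R2 *ᵥ x = R2 *ᵥ (Q *ᵥ x) := by
      rw [Matrix.mulVec_mulVec, hR2def, Matrix.mul_assoc (1 - P) Q Q, hQ2]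
    have hR1x : R1 *ᵥ x = R1 *ᵥ ((1 - Q) *ᵥ x) := by
      rw [Matrix.mulVec_mulVec, hR1def, Matrix.mul_assoc P (1 - Q) (1 - Q), one_sub_proj_idem hW1]
    have b2 : (R2 *ᵥ (Q *ᵥ x)) ⬝ᵥ (R2 *ᵥ (Q *ᵥ x)) ≤ Bd^2 * ((Q *ᵥ x) ⬝ᵥ (Q *ᵥ x)) :=
      dot_mulVec_sq_le R2 _ Bd hB h2
    have b1 : (R1 *ᵥ ((1 - Q) *ᵥ x)) ⬝ᵥ (R1 *ᵥ ((1 - Q) *ᵥ x))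
        ≤ Bd^2 * (((1 - Q) *ᵥ x) ⬝ᵥ ((1 - Q) *ᵥ x)) :=
      dot_mulVec_sq_le R1 _ Bd hB hR1t
    have hpyth : (Q *ᵥ x) ⬝ᵥ (Q *ᵥ x) + ((1 - Q) *ᵥ x) ⬝ᵥ ((1 - Q) *ᵥ x) = x ⬝ᵥ x := by
      have c1 : (Q *ᵥ x) ⬝ᵥ (Q *ᵥ x) = x ⬝ᵥ (Q *ᵥ x) := by
        rw [dot_mulVec_right, Matrix.mulVec_mulVec, hQt, hQ2]
      have c2 : ((1 - Q) *ᵥ x) ⬝ᵥ ((1 - Q) *ᵥ x) = x ⬝ᵥ ((1 - Q) *ᵥ x) := by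
        rw [dot_mulVec_right, Matrix.mulVec_mulVec, transpose_one_sub_proj,
          one_sub_proj_idem hW1]
      rw [c1, c2, ← dotProduct_add, ← Matrix.add_mulVec, add_sub_cancel,
        Matrix.one_mulVec]
    rw [hd, hR2x, hR1x]
    calc (R2 *ᵥ (Q *ᵥ x)) ⬝ᵥ (R2 *ᵥ (Q *ᵥ x))
          + (R1 *ᵥ ((1 - Q) *ᵥ x)) ⬝ᵥ (R1 *ᵥ ((1 - Q) *ᵥ x))
        ≤ Bd^2 * ((Q *ᵥ x) ⬝ᵥ (Q *ᵥ x)) + Bd^2 * (((1 - Q) *ᵥ x) ⬝ᵥ ((1 - Q) *ᵥ x)) :=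
          add_le_add b2 b1
      _ = Bd^2 * (x ⬝ᵥ x) := by rw [← mul_add, hpyth]
  calc Real.sqrt (((Q - P) *ᵥ x) ⬝ᵥ ((Q - P) *ᵥ x)) ≤ Real.sqrt (Bd^2 * (x ⬝ᵥ x)) :=
        Real.sqrt_le_sqrt hsq
    _ = Bd * Real.sqrt (x ⬝ᵥ x) := by
        rw [Real.sqrt_mul (sq_nonneg Bd), Real.sqrt_sq hB]

end S14
end Combine

noncomputable section QFBounds
open Matrix
namespace S14

lemma sv_eq {p : ℕ} (s : Fin p → ℝ) (i : ℕ) (h : i - 1 < p) : sv s i = s ⟨i - 1, h⟩ := by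
  unfold sv; exact dif_pos h

lemma sv_eq_zero {p : ℕ} (s : Fin p → ℝ) (i : ℕ) (h : ¬ (i - 1 < p)) : sv s i = 0 := by
  unfold sv; exact dif_neg h

/-- the matrix of the first `k` columns of the identity -/
def jmat (p k : ℕ) (h : k ≤ p) : Matrix (Fin p) (Fin k) ℝ :=
  (1 : Matrix (Fin p) (Fin p) ℝ).submatrix id (Fin.castLE h)

lemma firstCols_as_mul {m p k : ℕ} (U : Matrix (Fin m) (Fin p) ℝ) (h : k ≤ p) :
    firstCols U k h = U * jmat p k h := by
  ext i j
  simp only [firstCols, Matrix.submatrix_apply, id_eq, jmat, Matrix.mul_apply,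
    Matrix.one_apply]
  rw [Finset.sum_eq_single (Fin.castLE h j)]
  · simp
  · intro l _ hl; simp [hl]
  · intro hl; exact absurd (Finset.mem_univ _) hl

lemma jmat_orth {p k : ℕ} (h : k ≤ p) : (jmat p k h)ᵀ * jmat p k h = 1 := by
  have h1 : jmat p k h = firstCols (1 : Matrix (Fin p) (Fin p) ℝ) k h := rfl
  rw [h1]
  exact firstCols_orth (by rw [Matrix.transpose_one, Matrix.one_mul]) h

lemma diag_mul_jmat {p k : ℕ} (h : k ≤ p) (w : Fin p → ℝ) :
    Matrix.diagonal w * jmat p k h = jmat p k h * Matrix.diagonal (fun j => w (Fin.castLE h j)) := by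
  ext i j
  rw [Matrix.diagonal_mul, Matrix.mul_diagonal]
  simp only [jmat, Matrix.submatrix_apply, id_eq, Matrix.one_apply]
  by_cases hij : i = Fin.castLE h j
  · subst hij; simp
  · simp [hij]

/-- gram of first cols commutation: `(U diag(w) Uᵀ) U₁ = U₁ diag(w ∘ castLE)` -/
lemma gram_mul_firstCols {m p k : ℕ} {U : Matrix (Fin m) (Fin p) ℝ} (hU : Uᵀ * U = 1)
    (h : k ≤ p) (w : Fin p → ℝ) :
    (U * Matrix.diagonal w * Uᵀ) * firstCols U k h
      = firstCols U k h * Matrix.diagonal (fun j => w (Fin.castLE h j)) := by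
  rw [firstCols_as_mul U h, ← Matrix.mul_assoc (U * Matrix.diagonal w * Uᵀ) U (jmat p k h),
    Matrix.mul_assoc (U * Matrix.diagonal w) Uᵀ U, hU, Matrix.mul_one,
    Matrix.mul_assoc U (Matrix.diagonal w) (jmat p k h), diag_mul_jmat,
    ← Matrix.mul_assoc U (jmat p k h) _]

lemma gram_of_svd {m q p : ℕ} {X : Matrix (Fin m) (Fin q) ℝ} {U : Matrix (Fin m) (Fin p) ℝ}
    {s : Fin p → ℝ} {V : Matrix (Fin q) (Fin p) ℝ} (hV : Vᵀ * V = 1)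
    (hX : X = U * Matrix.diagonal s * Vᵀ) :
    X * Xᵀ = U * Matrix.diagonal (fun i => s i ^ 2) * Uᵀ := by
  subst hX
  have hXt : (U * Matrix.diagonal s * Vᵀ)ᵀ = V * (Matrix.diagonal s * Uᵀ) := by
    rw [Matrix.transpose_mul, Matrix.transpose_mul, Matrix.transpose_transpose,
      Matrix.diagonal_transpose]
  rw [hXt, Matrix.mul_assoc (U * Matrix.diagonal s) Vᵀ _,
    ← Matrix.mul_assoc Vᵀ V _, hV, Matrix.one_mul,
    ← Matrix.mul_assoc (U * Matrix.diagonal s) (Matrix.diagonal s) Uᵀ,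
    Matrix.mul_assoc U (Matrix.diagonal s) (Matrix.diagonal s),
    Matrix.diagonal_mul_diagonal]
  congr 2
  funext i
  ring

/-- coordinates of `Uᵀ (U₁ c)` vanish past `k` -/
lemma coords_tail_zero {m p k : ℕ} {U : Matrix (Fin m) (Fin p) ℝ} (hU : Uᵀ * U = 1)
    (h : k ≤ p) (c : Fin k → ℝ) :
    Uᵀ *ᵥ (firstCols U k h *ᵥ c) = jmat p k h *ᵥ c := by
  rw [Matrix.mulVec_mulVec, firstCols_as_mul U h, ← Matrix.mul_assoc, hU, Matrix.one_mul]

lemma jmat_mulVec_zero {p k : ℕ} (h : k ≤ p) (c : Fin k → ℝ) (i : Fin p) (hi : k ≤ i.1) :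
    (jmat p k h *ᵥ c) i = 0 := by
  simp only [jmat, Matrix.mulVec, dotProduct, Matrix.submatrix_apply, id_eq, Matrix.one_apply]
  apply Finset.sum_eq_zero
  intro j _
  have : i ≠ Fin.castLE h j := by
    intro he
    have : i.1 = j.1 := by rw [he]; rfl
    omega
  simp [this]

/-- lower bound on the quadratic form on the span of the first k columns -/
lemma qf_lower {m p k : ℕ} {U : Matrix (Fin m) (Fin p) ℝ} (hU : Uᵀ * U = 1) (h : k ≤ p)
    {s : Fin p → ℝ} (hAnti : Antitone s) (hpos : ∀ i, 0 ≤ s i) (hkidx : k - 1 < p)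
    (hk0 : 0 < k) (c : Fin k → ℝ) :
    s ⟨k - 1, hkidx⟩ ^ 2 * (c ⬝ᵥ c)
      ≤ (firstCols U k h *ᵥ c) ⬝ᵥ ((U * Matrix.diagonal (fun i => s i ^ 2) * Uᵀ)
          *ᵥ (firstCols U k h *ᵥ c)) := by
  rw [quad_diag, coords_tail_zero hU h c]
  have hcc : c ⬝ᵥ c = (jmat p k h *ᵥ c) ⬝ᵥ (jmat p k h *ᵥ c) :=
    (mulVec_dot_self (jmat_orth h) c).symm
  rw [hcc]
  simp only [dotProduct, Finset.mul_sum]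
  apply Finset.sum_le_sum
  intro i _
  by_cases hik : i.1 < k
  · have h1 : s ⟨k - 1, hkidx⟩ ≤ s i := by
      apply hAnti
      show i.1 ≤ k - 1
      omega
    have h2 : s ⟨k - 1, hkidx⟩ ^ 2 ≤ s i ^ 2 := by
      apply sq_le_sq'
      · nlinarith [hpos i, hpos ⟨k - 1, hkidx⟩]
      · exact h1
    calc s ⟨k - 1, hkidx⟩ ^ 2 * ((jmat p k h *ᵥ c) i * (jmat p k h *ᵥ c) i)
        ≤ s i ^ 2 * ((jmat p k h *ᵥ c) i * (jmat p k h *ᵥ c) i) :=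
          mul_le_mul_of_nonneg_right h2 (mul_self_nonneg _)
      _ = s i ^ 2 * (jmat p k h *ᵥ c) i ^ 2 := by ring
  · rw [jmat_mulVec_zero h c i (by omega)]
    simp
/-- upper bound on the quadratic form orthogonal to the first j columns -/
lemma qf_upper {m p j : ℕ} {U : Matrix (Fin m) (Fin p) ℝ} (hU : Uᵀ * U = 1) (h : j ≤ p)
    {s : Fin p → ℝ} (hpos : ∀ i, 0 ≤ s i) (t : ℝ) (ht : 0 ≤ t)
    (hts : ∀ i : Fin p, j ≤ i.1 → s i ≤ t)
    (v : Fin m → ℝ) (hv : (firstCols U j h)ᵀ *ᵥ v = 0) :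
    v ⬝ᵥ ((U * Matrix.diagonal (fun i => s i ^ 2) * Uᵀ) *ᵥ v) ≤ t ^ 2 * (v ⬝ᵥ v) := by
  rw [quad_diag]
  have hcoord : ∀ i : Fin p, i.1 < j → (Uᵀ *ᵥ v) i = 0 := by
    intro i hij
    have h1 := congrFun hv ⟨i.1, hij⟩
    rw [firstCols_transpose_mulVec] at h1
    have h2 : Fin.castLE h ⟨i.1, hij⟩ = i := rfl
    rw [h2] at h1
    exact h1
  have step1 : ∑ i, s i ^ 2 * ((Uᵀ *ᵥ v) i) ^ 2 ≤ t ^ 2 * ((Uᵀ *ᵥ v) ⬝ᵥ (Uᵀ *ᵥ v)) := by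
    simp only [dotProduct, Finset.mul_sum]
    apply Finset.sum_le_sum
    intro i _
    by_cases hij : i.1 < j
    · rw [hcoord i hij]; simp
    · have h1 : s i ≤ t := hts i (by omega)
      have h2 : s i ^ 2 ≤ t ^ 2 := by nlinarith [hpos i]
      calc s i ^ 2 * ((Uᵀ *ᵥ v) i) ^ 2 ≤ t ^ 2 * ((Uᵀ *ᵥ v) i) ^ 2 :=
            mul_le_mul_of_nonneg_right h2 (sq_nonneg _)
        _ = t ^ 2 * ((Uᵀ *ᵥ v) i * (Uᵀ *ᵥ v) i) := by ring
  calc ∑ i, s i ^ 2 * ((Uᵀ *ᵥ v) i) ^ 2 ≤ t ^ 2 * ((Uᵀ *ᵥ v) ⬝ᵥ (Uᵀ *ᵥ v)) := step1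
    _ ≤ t ^ 2 * (v ⬝ᵥ v) := mul_le_mul_of_nonneg_left (dot_transpose_le hU v) (sq_nonneg t)

end S14
end QFBounds

set_option maxHeartbeats 1000000 in
open Matrix S14 Module in
/-- deterministic right-sketching lemma. If
`‖A Gᵀ G Aᵀ − A Aᵀ‖₂ ≤ ε σ₁(A)²` with `ε < gap_k(A)`, then `A Gᵀ` has rank at least `k`
and `d₂(U_{AGᵀ,k}, U_{A,k}) ≤ ε / (gap_k(A) − ε)`. -/
theorem statement14
    {n d t k : ℕ} (hk0 : 0 < k)
    (A : Matrix (Fin n) (Fin d) ℝ)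
    (UA : Matrix (Fin n) (Fin (min n d)) ℝ) (sA : Fin (min n d) → ℝ)
    (VA : Matrix (Fin d) (Fin (min n d)) ℝ)
    (hSVD : IsThinSVD A UA sA VA)
    (hkrank : k ≤ A.rank) (hkp : k ≤ min n d) (hknt : k ≤ min n t)
    (hgap : sv sA (k + 1) < sv sA k)
    (G : Matrix (Fin t) (Fin d) ℝ) (ε : ℝ)
    (hGram : spec (A * Gᵀ * G * Aᵀ - A * Aᵀ) ≤ ε * sv sA 1 ^ 2)
    (hε : ε < (sv sA k ^ 2 - sv sA (k + 1) ^ 2) / sv sA 1 ^ 2) :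
    k ≤ (A * Gᵀ).rank ∧
    ∀ (UG : Matrix (Fin n) (Fin (min n t)) ℝ) (sG : Fin (min n t) → ℝ)
      (VG : Matrix (Fin t) (Fin (min n t)) ℝ), IsThinSVD (A * Gᵀ) UG sG VG →
      d2 (firstCols UG k hknt) (firstCols UA k hkp)
        ≤ ε / ((sv sA k ^ 2 - sv sA (k + 1) ^ 2) / sv sA 1 ^ 2 - ε) := by
  obtain ⟨hUAo, hVAo, hAAnti, hApos, hAdec⟩ := hSVD
  have hkidxA : k - 1 < min n d := by omega
  have h0idxA : 0 < min n d := by omega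
  have hsv1 : sv sA 1 = sA ⟨0, h0idxA⟩ := sv_eq sA 1 h0idxA
  have hsvk : sv sA k = sA ⟨k - 1, hkidxA⟩ := sv_eq sA k hkidxA
  -- positivity of singular values
  have hσk_pos : 0 < sv sA k := by
    rcases lt_or_eq_of_le (hApos ⟨k - 1, hkidxA⟩) with h | h
    · rw [hsvk]; exact h
    · exfalso
      have hzero : ∀ i : Fin (min n d), k - 1 ≤ i.1 → sA i = 0 := by
        intro i hi
        have h1 : sA i ≤ sA ⟨k - 1, hkidxA⟩ := hAAnti (by exact hi)
        have h2 := hApos i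
        rw [← h] at h1
        linarith
      have hrankA : A.rank ≤ k - 1 := by
        have h1 : A.rank ≤ (Matrix.diagonal sA).rank := by
          calc A.rank = (UA * Matrix.diagonal sA * VAᵀ).rank := by rw [← hAdec]
            _ ≤ (UA * Matrix.diagonal sA).rank := Matrix.rank_mul_le_left _ _
            _ ≤ (Matrix.diagonal sA).rank := Matrix.rank_mul_le_right _ _
        have h2 : (Matrix.diagonal sA).rank = Fintype.card {i // sA i ≠ 0} :=
          Matrix.rank_diagonal sA
        have h3 : Fintype.card {i // sA i ≠ 0} ≤ k - 1 := by
          rw [Fintype.card_subtype]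
          have hsub : (Finset.univ.filter (fun i : Fin (min n d) => sA i ≠ 0)).card
              ≤ (Finset.range (k - 1)).card := by
            apply Finset.card_le_card_of_injOn (fun i => i.1)
            · intro i hi
              simp only [Finset.coe_filter, Set.mem_setOf_eq, Finset.mem_coe, Finset.mem_filter] at hi
              simp only [Finset.coe_range, Set.mem_Iio, Finset.mem_coe, Finset.mem_range]
              by_contra hcon
              push_neg at hcon
              exact hi.2 (hzero i hcon)
            · intro i _ j _ hij
              exact Fin.ext hij
          rwa [Finset.card_range] at hsub
        omega
      omega
  have hσ1k : sv sA k ≤ sv sA 1 := by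
    rw [hsvk, hsv1]
    apply hAAnti
    simp [Fin.le_def]
  have hσ1_pos : 0 < sv sA 1 := lt_of_lt_of_le hσk_pos hσ1k
  have hσk1_nonneg : 0 ≤ sv sA (k + 1) := by
    by_cases hkd : k < min n d
    · rw [sv_eq sA (k + 1) (by omega)]; exact hApos _
    · rw [sv_eq_zero sA (k + 1) (by omega)]
  have hε0 : 0 ≤ ε := by
    have h1 := spec_nonneg (A * Gᵀ * G * Aᵀ - A * Aᵀ)
    nlinarith [pow_pos hσ1_pos 2, h1, hGram]
  have hΔδ : ε * sv sA 1 ^ 2 < sv sA k ^ 2 - sv sA (k + 1) ^ 2 := by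
    rw [lt_div_iff₀ (by positivity)] at hε
    linarith
  have hδ'0 : 0 ≤ ε * sv sA 1 ^ 2 := by positivity
  -- gram forms
  have hM : A * Aᵀ = UA * Matrix.diagonal (fun i => sA i ^ 2) * UAᵀ := gram_of_svd hVAo hAdec
  have hM'prod : A * Gᵀ * G * Aᵀ = (A * Gᵀ) * (A * Gᵀ)ᵀ := by
    rw [Matrix.transpose_mul, Matrix.transpose_transpose, Matrix.mul_assoc]
  have hU1o : (firstCols UA k hkp)ᵀ * firstCols UA k hkp = 1 := firstCols_orth hUAo hkp
  -- lower bound for M on span of U1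
  have hNP1 : ∀ c : Fin k → ℝ, sv sA k ^ 2 * (c ⬝ᵥ c)
      ≤ (firstCols UA k hkp *ᵥ c) ⬝ᵥ ((A * Aᵀ) *ᵥ (firstCols UA k hkp *ᵥ c)) := by
    intro c
    rw [hM, hsvk]
    exact qf_lower hUAo hkp hAAnti hApos hkidxA hk0 c
  -- lower bound for M' on span of U1
  have hM'low : ∀ c : Fin k → ℝ, (sv sA k ^ 2 - ε * sv sA 1 ^ 2) * (c ⬝ᵥ c)
      ≤ (firstCols UA k hkp *ᵥ c) ⬝ᵥ ((A * Gᵀ * G * Aᵀ) *ᵥ (firstCols UA k hkp *ᵥ c)) := by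
    intro c
    set v := firstCols UA k hkp *ᵥ c with hv
    have hvv : v ⬝ᵥ v = c ⬝ᵥ c := mulVec_dot_self hU1o c
    have hEsplit : (A * Gᵀ * G * Aᵀ) *ᵥ v
        = (A * Aᵀ) *ᵥ v + (A * Gᵀ * G * Aᵀ - A * Aᵀ) *ᵥ v := by
      rw [← Matrix.add_mulVec, add_sub_cancel]
    have hEbd : |v ⬝ᵥ ((A * Gᵀ * G * Aᵀ - A * Aᵀ) *ᵥ v)| ≤ (ε * sv sA 1 ^ 2) * (v ⬝ᵥ v) := by
      calc |v ⬝ᵥ ((A * Gᵀ * G * Aᵀ - A * Aᵀ) *ᵥ v)|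
          ≤ spec (A * Gᵀ * G * Aᵀ - A * Aᵀ) * (v ⬝ᵥ v) := abs_quad_le _ _
        _ ≤ (ε * sv sA 1 ^ 2) * (v ⬝ᵥ v) :=
            mul_le_mul_of_nonneg_right hGram (dot_self_nonneg v)
    have h1 := hNP1 c
    have h2 : -((ε * sv sA 1 ^ 2) * (v ⬝ᵥ v)) ≤ v ⬝ᵥ ((A * Gᵀ * G * Aᵀ - A * Aᵀ) *ᵥ v) :=
      neg_le_of_abs_le hEbd
    rw [hEsplit, dotProduct_add]
    rw [hvv] at h2
    linarith
  have hgap_pos : 0 < sv sA k ^ 2 - ε * sv sA 1 ^ 2 := by nlinarith [hσk1_nonneg]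
  constructor
  · -- rank part
    have hinj : Function.Injective (Matrix.mulVecLin ((A * Gᵀ * G * Aᵀ) * firstCols UA k hkp)) := by
      intro c1 c2 heq
      simp only [Matrix.mulVecLin_apply] at heq
      by_contra hne
      have hc : c1 - c2 ≠ 0 := sub_ne_zero.mpr hne
      have h0 : ((A * Gᵀ * G * Aᵀ) * firstCols UA k hkp) *ᵥ (c1 - c2) = 0 := by
        rw [Matrix.mulVec_sub, heq, sub_self]
      have h1 := hM'low (c1 - c2)
      have h0' : (A * Gᵀ * G * Aᵀ) *ᵥ (firstCols UA k hkp *ᵥ (c1 - c2)) = 0 := by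
        rw [Matrix.mulVec_mulVec]; exact h0
      rw [h0', dotProduct_zero] at h1
      have h3 : 0 < (c1 - c2) ⬝ᵥ (c1 - c2) := dot_self_pos hc
      nlinarith [h1, h3, hgap_pos]
    have hrkeq : ((A * Gᵀ * G * Aᵀ) * firstCols UA k hkp).rank = k := by
      rw [Matrix.rank, LinearMap.finrank_range_of_inj hinj, Module.finrank_fin_fun]
    calc k = ((A * Gᵀ * G * Aᵀ) * firstCols UA k hkp).rank := hrkeq.symm
      _ = ((A * Gᵀ) * (G * (Aᵀ * firstCols UA k hkp))).rank := by
          rw [← Matrix.mul_assoc, ← Matrix.mul_assoc]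
      _ ≤ (A * Gᵀ).rank := Matrix.rank_mul_le_left _ _
  · -- distance part
    intro UG sG VG hSVDG
    obtain ⟨hUGo, hVGo, hGAnti, hGpos, hGdec⟩ := hSVDG
    have hW1o : (firstCols UG k hknt)ᵀ * firstCols UG k hknt = 1 := firstCols_orth hUGo hknt
    have hkidxG : k - 1 < min n t := by omega
    have hsvkG : sv sG k = sG ⟨k - 1, hkidxG⟩ := sv_eq sG k hkidxG
    have hM' : A * Gᵀ * G * Aᵀ = UG * Matrix.diagonal (fun i => sG i ^ 2) * UGᵀ := by
      rw [hM'prod]; exact gram_of_svd hVGo hGdec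
    have hMsym : (A * Aᵀ)ᵀ = A * Aᵀ := proj_symm A
    have hM'sym : (A * Gᵀ * G * Aᵀ)ᵀ = A * Gᵀ * G * Aᵀ := by
      rw [hM'prod]; exact proj_symm (A * Gᵀ)
    have hCN : (A * Aᵀ) * firstCols UA k hkp
        = firstCols UA k hkp * Matrix.diagonal (fun j => sA (Fin.castLE hkp j) ^ 2) := by
      rw [hM]; exact gram_mul_firstCols hUAo hkp _
    have hC' : (A * Gᵀ * G * Aᵀ) * firstCols UG k hknt
        = firstCols UG k hknt * Matrix.diagonal (fun j => sG (Fin.castLE hknt j) ^ 2) := by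
      rw [hM']; exact gram_mul_firstCols hUGo hknt _
    have hsvG1_nonneg : 0 ≤ sv sG (k + 1) := by
      by_cases hkt : k < min n t
      · rw [sv_eq sG (k + 1) (by omega)]; exact hGpos _
      · rw [sv_eq_zero sG (k + 1) (by omega)]
    -- upper bound for M' orthogonal to W1
    have hN'Q1 : ∀ u : Fin n → ℝ, (firstCols UG k hknt)ᵀ *ᵥ u = 0 →
        u ⬝ᵥ ((A * Gᵀ * G * Aᵀ) *ᵥ u) ≤ sv sG (k + 1) ^ 2 * (u ⬝ᵥ u) := by
      intro u hu
      rw [hM']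
      apply qf_upper hUGo hknt hGpos (sv sG (k + 1)) hsvG1_nonneg _ u hu
      intro i hi
      have hkt : k < min n t := by omega
      rw [sv_eq sG (k + 1) (by omega)]
      apply hGAnti
      show (⟨k + 1 - 1, by omega⟩ : Fin (min n t)).1 ≤ i.1
      simp; omega
    -- upper bound for M orthogonal to U1
    have hN'Q2 : ∀ u : Fin n → ℝ, (firstCols UA k hkp)ᵀ *ᵥ u = 0 →
        u ⬝ᵥ ((A * Aᵀ) *ᵥ u) ≤ sv sA (k + 1) ^ 2 * (u ⬝ᵥ u) := by
      intro u hu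
      rw [hM]
      apply qf_upper hUAo hkp hApos (sv sA (k + 1)) hσk1_nonneg _ u hu
      intro i hi
      have hkd : k < min n d := by omega
      rw [sv_eq sA (k + 1) (by omega)]
      apply hAAnti
      show (⟨k + 1 - 1, by omega⟩ : Fin (min n d)).1 ≤ i.1
      simp; omega
    -- lower bound for M' on span of W1
    have hNP2 : ∀ c : Fin k → ℝ, sv sG k ^ 2 * (c ⬝ᵥ c)
        ≤ (firstCols UG k hknt *ᵥ c) ⬝ᵥ ((A * Gᵀ * G * Aᵀ) *ᵥ (firstCols UG k hknt *ᵥ c)) := by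
      intro c
      rw [hM', hsvkG]
      exact qf_lower hUGo hknt hGAnti hGpos hkidxG hk0 c
    have hEneg : spec (A * Aᵀ - A * Gᵀ * G * Aᵀ) ≤ ε * sv sA 1 ^ 2 := by
      have h1 : A * Aᵀ - A * Gᵀ * G * Aᵀ = -(A * Gᵀ * G * Aᵀ - A * Aᵀ) := by rw [neg_sub]
      rw [h1, spec_neg]
      exact hGram
    -- one-sided bounds
    have hOS1 := one_sided hU1o hW1o hMsym hM'sym hCN hC'
      (sv sA k ^ 2) (sv sG (k + 1) ^ 2) (ε * sv sA 1 ^ 2) hNP1 hN'Q1 hGram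
    have hOS2 := one_sided hW1o hU1o hM'sym hMsym hC' hCN
      (sv sG k ^ 2) (sv sA (k + 1) ^ 2) (ε * sv sA 1 ^ 2) hNP2 hN'Q2 hEneg
    -- Weyl bounds
    have hWeyl1 : sv sG (k + 1) ^ 2 ≤ sv sA (k + 1) ^ 2 + ε * sv sA 1 ^ 2 := by
      by_cases hkt : k < min n t
      · have hk1nt : k + 1 ≤ min n t := by omega
        have hXo : (firstCols UG (k + 1) hk1nt)ᵀ * firstCols UG (k + 1) hk1nt = 1 :=
          firstCols_orth hUGo hk1nt
        apply weyl_aux (Nat.lt_succ_self k) hXo (firstCols UA k hkp)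
          (A * Gᵀ * G * Aᵀ) (A * Aᵀ) _ _ _ _ hN'Q2 hGram
        intro c
        rw [sv_eq sG (k + 1) (show k + 1 - 1 < min n t by omega), hM']
        exact qf_lower hUGo hk1nt hGAnti hGpos (show k + 1 - 1 < min n t by omega)
          (Nat.succ_pos k) c
      · rw [sv_eq_zero sG (k + 1) (by omega)]
        have h9 : (0:ℝ)^2 = 0 := by norm_num
        rw [h9]
        linarith [sq_nonneg (sv sA (k + 1)), hδ'0]
    have hWeyl2 : sv sA k ^ 2 ≤ sv sG k ^ 2 + ε * sv sA 1 ^ 2 := by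
      have hk1nt : k - 1 ≤ min n t := by omega
      apply weyl_aux (show k - 1 < k by omega) hU1o (firstCols UG (k - 1) hk1nt)
        (A * Aᵀ) (A * Gᵀ * G * Aᵀ) _ _ _ hNP1 _ hEneg
      intro v hv
      rw [hM']
      apply qf_upper hUGo hk1nt hGpos (sv sG k) (by rw [hsvkG]; exact hGpos _) _ v hv
      intro i hi
      rw [hsvkG]
      apply hGAnti
      show (⟨k - 1, hkidxG⟩ : Fin (min n t)).1 ≤ i.1
      exact hi
    -- numeric assembly
    set Bd := ε / ((sv sA k ^ 2 - sv sA (k + 1) ^ 2) / sv sA 1 ^ 2 - ε) with hBddef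
    have hσ1sq : (sv sA 1 : ℝ) ^ 2 ≠ 0 := by positivity
    have hden : (sv sA k ^ 2 - sv sA (k + 1) ^ 2) / sv sA 1 ^ 2 - ε
        = (sv sA k ^ 2 - sv sA (k + 1) ^ 2 - ε * sv sA 1 ^ 2) / sv sA 1 ^ 2 := by
      field_simp
    have hgapd : 0 < sv sA k ^ 2 - sv sA (k + 1) ^ 2 - ε * sv sA 1 ^ 2 := by linarith
    have hBd_eq : Bd = (ε * sv sA 1 ^ 2) / (sv sA k ^ 2 - sv sA (k + 1) ^ 2 - ε * sv sA 1 ^ 2) := by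
      rw [hBddef, hden, div_div_eq_mul_div]
    have hBd0 : 0 ≤ Bd := by
      rw [hBd_eq]
      positivity
    have hBdmul : Bd * (sv sA k ^ 2 - sv sA (k + 1) ^ 2 - ε * sv sA 1 ^ 2) = ε * sv sA 1 ^ 2 := by
      rw [hBd_eq, div_mul_cancel₀ _ (ne_of_gt hgapd)]
    have haux : ∀ σ : ℝ, 0 ≤ σ →
        σ * (sv sA k ^ 2 - sv sA (k + 1) ^ 2 - ε * sv sA 1 ^ 2) ≤ ε * sv sA 1 ^ 2 → σ ≤ Bd := by
      intro σ hσ0 h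
      have h2 : σ * (sv sA k ^ 2 - sv sA (k + 1) ^ 2 - ε * sv sA 1 ^ 2)
          ≤ Bd * (sv sA k ^ 2 - sv sA (k + 1) ^ 2 - ε * sv sA 1 ^ 2) := by
        rw [hBdmul]; exact h
      exact le_of_mul_le_mul_right h2 hgapd
    have hbound1 : spec ((1 - firstCols UG k hknt * (firstCols UG k hknt)ᵀ)
        * (firstCols UA k hkp * (firstCols UA k hkp)ᵀ)) ≤ Bd := by
      apply haux _ (spec_nonneg _)
      refine le_trans ?_ hOS1
      apply mul_le_mul_of_nonneg_left _ (spec_nonneg _)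
      linarith [hWeyl1]
    have hbound2 : spec ((1 - firstCols UA k hkp * (firstCols UA k hkp)ᵀ)
        * (firstCols UG k hknt * (firstCols UG k hknt)ᵀ)) ≤ Bd := by
      apply haux _ (spec_nonneg _)
      refine le_trans ?_ hOS2
      apply mul_le_mul_of_nonneg_left _ (spec_nonneg _)
      linarith [hWeyl2]
    have hd2 : d2 (firstCols UG k hknt) (firstCols UA k hkp)
        = spec (firstCols UG k hknt * (firstCols UG k hknt)ᵀ
            - firstCols UA k hkp * (firstCols UA k hkp)ᵀ) := by
      rw [d2, projCol_of_orthonormal hW1o, projCol_of_orthonormal hU1o]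
    rw [hd2]
    exact combine hU1o hW1o hBd0 hbound1 hbound2
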